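/- Let 1 < p, q < ∞ with 1/p + 1/q ≥ 1. Let X and Y be Banach spaces with unconditional finite-dimensional Schauder decompositions {X_i}_{i∈I} and {Y_j}_{j∈J} having a disjoint lower p-estimate and a disjoint lower q-estimate, respectively. Let W₁ ⊆ X and W₂ ⊆ Y be sets such that W₁ ⊗ W₂ := {x ⊗ y : x ∈ W₁, y ∈ W₂} is conditionally weakly compact in X ⊗π Y. Then either W₁ is relatively norm compact in X or W₂ is relatively norm compact in Y. -/

import Mathlib

open Filter Topology Pointwise MeasureTheory
open scoped ENNReal

/-- A set is weakly compact if its image in the weak space is compact. -/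
def WeaklyCompact {Z : Type*} [NormedAddCommGroup Z] [NormedSpace ℝ Z] (K : Set Z) : Prop :=
  IsCompact (toWeakSpace ℝ Z '' K)

/-- A set is relatively weakly compact if the weak closure of its image in the weak space
is compact. -/
def RelWeaklyCompact {Z : Type*} [NormedAddCommGroup Z] [NormedSpace ℝ Z] (K : Set Z) : Prop :=
  IsCompact (closure (toWeakSpace ℝ Z '' K))

/-- A set is conditionally weakly compact (weakly precompact) if every sequence in it has a
weakly Cauchy subsequence. -/
def CondWeaklyCompact {Z : Type*} [NormedAddCommGroup Z] [NormedSpace ℝ Z] (D : Set Z) : Prop :=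
  ∀ u : ℕ → Z, (∀ n, u n ∈ D) → ∃ φ : ℕ → ℕ, StrictMono φ ∧
    ∀ f : Z →L[ℝ] ℝ, ∃ l : ℝ, Tendsto (fun n => f (u (φ n))) atTop (nhds l)

/-- `Z` is strongly weakly compactly generated by the weakly compact set `G`. -/
def SWCGBy {Z : Type*} [NormedAddCommGroup Z] [NormedSpace ℝ Z] (G : Set Z) : Prop :=
  WeaklyCompact G ∧ ∀ K : Set Z, WeaklyCompact K → ∀ ε : ℝ, 0 < ε →
    ∃ n : ℕ, K ⊆ (n : ℝ) • G + Metric.closedBall (0 : Z) ε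

/-- A Banach space is strongly weakly compactly generated. -/
def IsSWCG (Z : Type*) [NormedAddCommGroup Z] [NormedSpace ℝ Z] : Prop :=
  ∃ G : Set Z, SWCGBy G

/-- A Banach space is strongly conditionally weakly compactly generated. -/
def IsSCWCG (Z : Type*) [NormedAddCommGroup Z] [NormedSpace ℝ Z] : Prop :=
  ∃ G : Set Z, CondWeaklyCompact G ∧ ∀ C : Set Z, CondWeaklyCompact C → ∀ ε : ℝ, 0 < ε →
    ∃ n : ℕ, C ⊆ (n : ℝ) • G + Metric.closedBall (0 : Z) ε

/-- A Banach space is weakly sequentially complete if every weakly Cauchy sequence is weakly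
convergent. -/
def WeaklySeqComplete (Z : Type*) [NormedAddCommGroup Z] [NormedSpace ℝ Z] : Prop :=
  ∀ u : ℕ → Z, (∀ f : Z →L[ℝ] ℝ, ∃ l : ℝ, Tendsto (fun n => f (u n)) atTop (nhds l)) →
    ∃ z : Z, ∀ f : Z →L[ℝ] ℝ, Tendsto (fun n => f (u n)) atTop (nhds (f z))

/-- A Banach space has the Schur property if weakly convergent sequences are norm convergent. -/
def SchurProperty (Z : Type*) [NormedAddCommGroup Z] [NormedSpace ℝ Z] : Prop :=
  ∀ u : ℕ → Z, ∀ z : Z,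
    (∀ f : Z →L[ℝ] ℝ, Tendsto (fun n => f (u n)) atTop (nhds (f z))) →
      Tendsto u atTop (nhds z)

/-- `Z`, together with the continuous bilinear map `t`, is (a realization of) the projective
tensor product `X ⊗π Y`: the elementary tensors span a dense subspace, on that subspace the
norm is the projective norm, and every bilinear functional of norm at most one induces a
functional on `Z` of norm at most one. -/
def IsProjTensorProduct {X Y Z : Type*} [NormedAddCommGroup X] [NormedSpace ℝ X]
    [NormedAddCommGroup Y] [NormedSpace ℝ Y] [NormedAddCommGroup Z] [NormedSpace ℝ Z]
    (t : X →L[ℝ] Y →L[ℝ] Z) : Prop :=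
  Dense ((Submodule.span ℝ {z : Z | ∃ x y, z = t x y} : Submodule ℝ Z) : Set Z) ∧
  (∀ z : Z, z ∈ Submodule.span ℝ {z : Z | ∃ x y, z = t x y} →
    ‖z‖ = sInf {r : ℝ | ∃ (n : ℕ) (x : Fin n → X) (y : Fin n → Y),
      z = ∑ i, t (x i) (y i) ∧ r = ∑ i, ‖x i‖ * ‖y i‖}) ∧
  (∀ B : X →L[ℝ] Y →L[ℝ] ℝ, ‖B‖ ≤ 1 →
    ∃ φ : Z →L[ℝ] ℝ, ‖φ‖ ≤ 1 ∧ ∀ x y, φ (t x y) = B x y)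

/-- An unconditional Schauder decomposition of `X` indexed by `I`, given by its family of
projections `proj C` for `C ⊆ I`: each `proj C x` is the unconditional sum of the coordinate
projections `proj {i} x`, `i ∈ C`, the coordinate projections are pairwise disjoint idempotents
and they sum to the identity. -/
structure SchauderDecomp (I : Type*) (X : Type*) [NormedAddCommGroup X]
    [NormedSpace ℝ X] where
  proj : Set I → (X →L[ℝ] X)
  hasSum_proj : ∀ (C : Set I) (x : X), HasSum (fun i : C => proj {(i : I)} x) (proj C x)
  proj_univ : ∀ x, proj Set.univ x = x
  proj_idem : ∀ i : I, ∀ x, proj {i} (proj {i} x) = proj {i} x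
  proj_disjoint : ∀ i j : I, i ≠ j → ∀ x, proj {i} (proj {j} x) = 0

/-- The decomposition is finite dimensional if each coordinate subspace is finite dimensional. -/
def SchauderDecomp.FinDim {I X : Type*} [NormedAddCommGroup X] [NormedSpace ℝ X]
    (d : SchauderDecomp I X) : Prop :=
  ∀ i : I, FiniteDimensional ℝ (LinearMap.range ((d.proj {i}) : X →ₗ[ℝ] X))

/-- The decomposition has a disjoint lower `p`-estimate. -/
def SchauderDecomp.DisjLowerEstimate {I X : Type*} [NormedAddCommGroup X] [NormedSpace ℝ X]
    (d : SchauderDecomp I X) (p : ℝ) : Prop :=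
  ∃ c : ℝ, 0 < c ∧ ∀ (r : ℕ) (C : Fin r → Set I), (∀ k, (C k).Finite) →
    (Pairwise fun k l => Disjoint (C k) (C l)) →
    ∀ x : X, (∑ k, ‖d.proj (C k) x‖ ^ p) ^ (1 / p) ≤ c * ‖x‖

namespace SchauderDecomp

variable {I X : Type*} [NormedAddCommGroup X] [NormedSpace ℝ X] (d : SchauderDecomp I X)

lemma hasSum_indicator (C : Set I) (x : X) :
    HasSum (C.indicator fun i => d.proj {i} x) (d.proj C x) := by
  rw [← hasSum_subtype_iff_indicator]
  exact d.hasSum_proj C x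

lemma hasSum_total (x : X) : HasSum (fun i => d.proj {i} x) x := by
  have h := d.hasSum_indicator Set.univ x
  rwa [Set.indicator_univ, d.proj_univ] at h

lemma summable_total (x : X) : Summable (fun i => d.proj {i} x) :=
  (d.hasSum_total x).summable

lemma proj_finset (s : Finset I) (x : X) :
    d.proj ↑s x = ∑ i ∈ s, d.proj {i} x := by
  classical
  have h1 := d.hasSum_indicator (↑s) x
  have h3 : HasSum ((↑s : Set I).indicator fun i => d.proj {i} x)
      (∑ i ∈ s, (↑s : Set I).indicator (fun i => d.proj {i} x) i) :=
    hasSum_sum_of_ne_finset_zero (fun b hb => by simp [Set.indicator_apply, hb])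
  have h4 : ∑ i ∈ s, (↑s : Set I).indicator (fun i => d.proj {i} x) i
      = ∑ i ∈ s, d.proj {i} x :=
    Finset.sum_congr rfl fun i hi => by simp [Set.indicator_apply, hi]
  rw [h4] at h3
  exact h1.unique h3

lemma proj_compl (C : Set I) (x : X) : d.proj Cᶜ x = x - d.proj C x := by
  have h1 := d.hasSum_indicator C x
  have h2 := d.hasSum_indicator Cᶜ x
  have h3 : HasSum (fun i => d.proj {i} x) (d.proj C x + d.proj Cᶜ x) := by
    have h4 := h1.add h2
    have h5 : (fun i => C.indicator (fun i => d.proj {i} x) i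
        + Cᶜ.indicator (fun i => d.proj {i} x) i) = fun i => d.proj {i} x := by
      have := Set.indicator_self_add_compl C (fun i => d.proj {i} x)
      exact this
    rwa [show (fun i => C.indicator (fun i => d.proj {i} x) i
        + Cᶜ.indicator (fun i => d.proj {i} x) i) = fun i => d.proj {i} x from
      funext fun i => congrFun (Set.indicator_self_add_compl C _) i] at h4
  have h6 := (d.hasSum_total x).unique h3
  exact eq_sub_of_add_eq' h6.symm

lemma vanishing (x : X) {δ : ℝ} (hδ : 0 < δ) :
    ∃ s : Finset I, ∀ t : Finset I, Disjoint t s → ‖d.proj ↑t x‖ < δ := by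
  obtain ⟨s, hs⟩ := (d.summable_total x).vanishing (Metric.ball_mem_nhds (0 : X) hδ)
  refine ⟨s, fun t ht => ?_⟩
  have := hs t ht
  rw [d.proj_finset]
  simpa [mem_ball_zero_iff] using this

end SchauderDecomp
/-- Strong recursion principle used to build sequences by choice. -/
def natStrongFix {D : Sort*} (S : ∀ k : ℕ, (∀ j, j < k → D) → D) : ℕ → D := fun k =>
  S k (fun j hj => natStrongFix S j)
termination_by k => k
decreasing_by exact hj

lemma natStrongFix_eq {D : Sort*} (S : ∀ k : ℕ, (∀ j, j < k → D) → D) (k : ℕ) :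
    natStrongFix S k = S k (fun j _ => natStrongFix S j) := by
  conv_lhs => rw [natStrongFix]

/-- In a finite-dimensional normed space, a weakly Cauchy sequence converges. -/
lemma weakCauchy_finDim {E : Type*} [NormedAddCommGroup E] [NormedSpace ℝ E]
    [FiniteDimensional ℝ E] (v : ℕ → E)
    (h : ∀ g : E →L[ℝ] ℝ, ∃ l, Filter.Tendsto (fun n => g (v n)) Filter.atTop (nhds l)) :
    ∃ w : E, Filter.Tendsto v Filter.atTop (nhds w) := by
  classical
  let b := Module.finBasis ℝ E
  have hcoord : ∀ i, ∃ l, Filter.Tendsto (fun n => b.coord i (v n)) Filter.atTop (nhds l) := by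
    intro i
    obtain ⟨l, hl⟩ := h (LinearMap.toContinuousLinearMap (b.coord i))
    exact ⟨l, by simpa using hl⟩
  choose L hL using hcoord
  refine ⟨b.equivFunL.symm L, ?_⟩
  have h1 : Filter.Tendsto (fun n => b.equivFunL (v n)) Filter.atTop (nhds L) := by
    rw [tendsto_pi_nhds]
    intro i
    simpa [Module.Basis.equivFunL, Module.Basis.equivFun_apply, Module.Basis.coord_apply] using hL i
  have h2 := (b.equivFunL.symm.continuous.tendsto L).comp h1
  have h3 : (⇑b.equivFunL.symm ∘ fun n => b.equivFunL (v n)) = v := by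
    funext n; simp
  rwa [h3] at h2
/-- For a weakly Cauchy sequence, each finite block of a finite-dimensional Schauder
decomposition converges in norm. -/
lemma proj_tendsto_of_weakCauchy {I X : Type*} [NormedAddCommGroup X] [NormedSpace ℝ X]
    (d : SchauderDecomp I X) (hfd : d.FinDim) (a : ℕ → X)
    (ha : ∀ F : X →L[ℝ] ℝ, ∃ l, Filter.Tendsto (fun n => F (a n)) Filter.atTop (nhds l))
    (s : Finset I) :
    ∃ w, Filter.Tendsto (fun n => d.proj ↑s (a n)) Filter.atTop (nhds w) := by
  classical
  set S : Submodule ℝ X := s.sup fun i => LinearMap.range ((d.proj {i}) : X →ₗ[ℝ] X) with hS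
  haveI h1 : ∀ i : I, FiniteDimensional ℝ (LinearMap.range ((d.proj {i}) : X →ₗ[ℝ] X)) := hfd
  haveI : FiniteDimensional ℝ S := Submodule.finiteDimensional_finset_sup _ _
  have hmem : ∀ n, d.proj ↑s (a n) ∈ S := by
    intro n
    rw [d.proj_finset]
    refine Submodule.sum_mem _ fun i hi => ?_
    exact Finset.le_sup (f := fun i => LinearMap.range ((d.proj {i}) : X →ₗ[ℝ] X)) hi
      (LinearMap.mem_range_self _ _)
  set v : ℕ → S := fun n => ⟨d.proj ↑s (a n), hmem n⟩ with hv
  have hwc : ∀ g : S →L[ℝ] ℝ, ∃ l, Filter.Tendsto (fun n => g (v n)) Filter.atTop (nhds l) := by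
    intro g
    obtain ⟨G, hG, -⟩ := exists_extension_norm_eq (𝕜 := ℝ) S g
    obtain ⟨l, hl⟩ := ha (G.comp (d.proj ↑s))
    refine ⟨l, ?_⟩
    have : (fun n => g (v n)) = fun n => (G.comp (d.proj ↑s)) (a n) := by
      funext n
      have := hG (v n)
      simpa [hv] using this.symm
    rwa [this]
  obtain ⟨w, hw⟩ := weakCauchy_finDim v hwc
  exact ⟨↑w, by exact (continuous_subtype_val.tendsto w).comp hw⟩

/-- A non-totally-bounded set contains a uniformly separated sequence. -/
lemma exists_separated_seq {X : Type*} [NormedAddCommGroup X] {W : Set X}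
    (h : ¬ TotallyBounded W) :
    ∃ ε : ℝ, 0 < ε ∧ ∃ a : ℕ → X, (∀ n, a n ∈ W) ∧
      ∀ m n : ℕ, m ≠ n → ε ≤ ‖a m - a n‖ := by
  classical
  rw [Metric.totallyBounded_iff] at h
  push_neg at h
  obtain ⟨ε, hε, hcov⟩ := h
  have key : ∀ k : ℕ, ∀ prev : ∀ j, j < k → X,
      ∃ x : X, x ∈ W ∧ ∀ j (hj : j < k), ε ≤ dist x (prev j hj) := by
    intro k prev
    have := hcov (Finset.image (fun j : Fin k => prev j.1 j.2) Finset.univ : Finset X)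
      (Finset.finite_toSet _)
    rw [Set.not_subset] at this
    obtain ⟨x, hxW, hx⟩ := this
    refine ⟨x, hxW, fun j hj => ?_⟩
    by_contra hlt
    push_neg at hlt
    apply hx
    have hmem : prev j hj ∈ (↑(Finset.image (fun j : Fin k => prev j.1 j.2) Finset.univ) : Set X) := by
      simp only [Finset.coe_image, Set.mem_image, Finset.mem_coe]
      exact ⟨⟨j, hj⟩, by simp⟩
    exact Set.mem_biUnion hmem (Metric.mem_ball.2 hlt)
  set a : ℕ → X := natStrongFix (fun k prev => Classical.choose (key k prev)) with haa
  have haspec : ∀ k, a k ∈ W ∧ ∀ j (hj : j < k), ε ≤ dist (a k) (a j) := by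
    intro k
    have := Classical.choose_spec (key k (fun j _ => a j))
    rw [haa, natStrongFix_eq]
    exact this
  refine ⟨ε, hε, a, fun n => (haspec n).1, fun m n hmn => ?_⟩
  rcases lt_or_gt_of_ne hmn with h1 | h1
  · have := (haspec n).2 m h1
    rw [dist_eq_norm] at this
    rwa [norm_sub_rev] at this
  · have := (haspec m).2 n h1
    rwa [dist_eq_norm] at this
/-- Monotonicity of finite ℓ^p norms: for `0 < q ≤ p'`. -/
lemma lp_norm_mono {r : ℕ} (u : ℕ → ℝ) (hu : ∀ k, 0 ≤ u k) {q p' : ℝ} (hq : 0 < q)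
    (hqp : q ≤ p') :
    (∑ k ∈ Finset.range r, u k ^ p') ^ (1 / p') ≤ (∑ k ∈ Finset.range r, u k ^ q) ^ (1 / q) := by
  have hp' : 0 < p' := lt_of_lt_of_le hq hqp
  set A : ℝ := (∑ k ∈ Finset.range r, u k ^ q) ^ (1 / q) with hA
  have hsum_nonneg : (0:ℝ) ≤ ∑ k ∈ Finset.range r, u k ^ q :=
    Finset.sum_nonneg fun k _ => Real.rpow_nonneg (hu k) q
  have hA_nonneg : 0 ≤ A := Real.rpow_nonneg hsum_nonneg _
  rcases eq_or_lt_of_le hA_nonneg with hA0 | hApos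
  · -- A = 0 : then the q-sum is zero, so every u k = 0 on the range
    have hsq : (∑ k ∈ Finset.range r, u k ^ q) = 0 := by
      by_contra hne
      have hpos : 0 < ∑ k ∈ Finset.range r, u k ^ q := lt_of_le_of_ne hsum_nonneg (Ne.symm hne)
      have : 0 < A := Real.rpow_pos_of_pos hpos _
      rw [← hA0] at this
      exact lt_irrefl _ this
    have hz : ∀ k ∈ Finset.range r, u k = 0 := by
      intro k hk
      have := (Finset.sum_eq_zero_iff_of_nonneg
        (fun k _ => Real.rpow_nonneg (hu k) q)).1 hsq k hk
      have huk := hu k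
      rcases eq_or_lt_of_le huk with h0 | hpos
      · exact h0.symm
      · exfalso
        have : (0:ℝ) < u k ^ q := Real.rpow_pos_of_pos hpos q
        rw [‹u k ^ q = 0›] at this
        exact lt_irrefl _ this
    have : (∑ k ∈ Finset.range r, u k ^ p') = 0 :=
      Finset.sum_eq_zero fun k hk => by
        rw [hz k hk]; exact Real.zero_rpow (ne_of_gt hp')
    rw [this, Real.zero_rpow (by positivity : (1:ℝ)/p' ≠ 0), ← hA0]
  · -- A > 0
    have hqq : (1 / q) * q = 1 := by field_simp
    have hAq : A ^ q = ∑ k ∈ Finset.range r, u k ^ q := by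
      rw [hA, ← Real.rpow_mul hsum_nonneg, hqq, Real.rpow_one]
    have hle : ∀ k ∈ Finset.range r, u k ≤ A := by
      intro k hk
      have h1 : u k ^ q ≤ A ^ q := by
        rw [hAq]
        exact Finset.single_le_sum (fun k _ => Real.rpow_nonneg (hu k) q) hk
      have h2 : (u k ^ q) ^ (1 / q) ≤ (A ^ q) ^ (1 / q) :=
        Real.rpow_le_rpow (Real.rpow_nonneg (hu k) q) h1 (by positivity)
      rwa [← Real.rpow_mul (hu k), ← Real.rpow_mul (le_of_lt hApos), mul_one_div,
        div_self (ne_of_gt hq), Real.rpow_one, Real.rpow_one] at h2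
    have hterm : ∀ k ∈ Finset.range r, u k ^ p' ≤ u k ^ q * A ^ (p' - q) := by
      intro k hk
      rcases eq_or_lt_of_le (hu k) with h0 | hpos
      · rw [← h0, Real.zero_rpow (ne_of_gt hp')]
        positivity
      · have : u k ^ p' = u k ^ q * u k ^ (p' - q) := by
          rw [← Real.rpow_add hpos]; ring_nf
        rw [this]
        exact mul_le_mul_of_nonneg_left
          (Real.rpow_le_rpow (hu k) (hle k hk) (by linarith))
          (Real.rpow_nonneg (hu k) q)
    have hsum : (∑ k ∈ Finset.range r, u k ^ p') ≤ A ^ p' := by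
      calc (∑ k ∈ Finset.range r, u k ^ p')
          ≤ ∑ k ∈ Finset.range r, u k ^ q * A ^ (p' - q) := Finset.sum_le_sum hterm
        _ = (∑ k ∈ Finset.range r, u k ^ q) * A ^ (p' - q) := by
            rw [← Finset.sum_mul]
        _ = A ^ q * A ^ (p' - q) := by rw [hAq]
        _ = A ^ p' := by rw [← Real.rpow_add hApos]; ring_nf
    have h3 : (∑ k ∈ Finset.range r, u k ^ p') ^ (1 / p') ≤ (A ^ p') ^ (1 / p') :=
      Real.rpow_le_rpow (Finset.sum_nonneg fun k _ => Real.rpow_nonneg (hu k) p') hsum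
        (by positivity)
    rwa [← Real.rpow_mul (le_of_lt hApos), mul_one_div, div_self (ne_of_gt hp'),
      Real.rpow_one] at h3
/-- Construction of a bounded bilinear form from disjointly supported functionals, using the
disjoint lower estimates and Hölder's inequality. -/
lemma exists_bilinear {I J X Y : Type*} [NormedAddCommGroup X] [NormedSpace ℝ X]
    [NormedAddCommGroup Y] [NormedSpace ℝ Y]
    {p q : ℝ} (hp : 1 < p) (hq : 1 < q) (hpq : 1 ≤ 1 / p + 1 / q)
    (dX : SchauderDecomp I X) (dY : SchauderDecomp J Y)
    (hpX : dX.DisjLowerEstimate p) (hqY : dY.DisjLowerEstimate q)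
    (F : ℕ → Finset I) (G : ℕ → Finset J)
    (hF : ∀ k l, k ≠ l → Disjoint (F k) (F l)) (hG : ∀ k l, k ≠ l → Disjoint (G k) (G l))
    (f : ℕ → X →L[ℝ] ℝ) (g : ℕ → Y →L[ℝ] ℝ)
    (hf : ∀ k x, |f k x| ≤ ‖dX.proj ↑(F k) x‖) (hg : ∀ k y, |g k y| ≤ ‖dY.proj ↑(G k) y‖)
    (c : ℕ → ℝ) (hc : ∀ k, |c k| ≤ 1) :
    ∃ B : X →L[ℝ] Y →L[ℝ] ℝ, (∀ x y, B x y = ∑' k, c k * (f k x * g k y)) ∧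
      (∀ x y, Summable (fun k => c k * (f k x * g k y))) := by
  classical
  obtain ⟨cX, hcX, hX⟩ := hpX
  obtain ⟨cY, hcY, hY⟩ := hqY
  have hq0 : (0:ℝ) < q := lt_trans one_pos hq
  set p' : ℝ := p / (p - 1) with hp'def
  have hconj : p.HolderConjugate p' := Real.HolderConjugate.conjExponent hp
  have hp'pos : 0 < p' := hconj.symm.pos
  have hinv : p'⁻¹ ≤ q⁻¹ := by
    have h1 := hconj.inv_add_inv_eq_one
    rw [one_div, one_div] at hpq
    linarith
  have hqp' : q ≤ p' := by
    have h2 := mul_le_mul_of_nonneg_left hinv (le_of_lt (mul_pos hq0 hp'pos))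
    have hqne : q ≠ 0 := ne_of_gt hq0
    have hp'ne : p' ≠ 0 := ne_of_gt hp'pos
    field_simp at h2
    nlinarith [h2]
  -- key Hölder bound for partial sums
  have key : ∀ (x : X) (y : Y) (r : ℕ),
      ∑ k ∈ Finset.range r, ‖dX.proj ↑(F k) x‖ * ‖dY.proj ↑(G k) y‖
        ≤ (cX * ‖x‖) * (cY * ‖y‖) := by
    intro x y r
    have h1 := Real.inner_le_Lp_mul_Lq_of_nonneg (s := Finset.range r)
      (f := fun k => ‖dX.proj ↑(F k) x‖) (g := fun k => ‖dY.proj ↑(G k) y‖) hconj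
      (fun k _ => norm_nonneg _) (fun k _ => norm_nonneg _)
    have h2 := lp_norm_mono (r := r) (fun k => ‖dY.proj ↑(G k) y‖)
      (fun k => norm_nonneg _) hq0 hqp'
    have hXr : (∑ k ∈ Finset.range r, ‖dX.proj ↑(F k) x‖ ^ p) ^ (1/p) ≤ cX * ‖x‖ := by
      have := hX r (fun k : Fin r => (↑(F k.1) : Set I)) (fun k => Finset.finite_toSet _)
        (fun k l hkl => Finset.disjoint_coe.2 (hF k.1 l.1 (fun h => hkl (Fin.val_injective h))))
        x
      rwa [show (∑ k : Fin r, ‖dX.proj ↑(F k.1) x‖ ^ p)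
          = ∑ k ∈ Finset.range r, ‖dX.proj ↑(F k) x‖ ^ p from
        Fin.sum_univ_eq_sum_range (fun k => ‖dX.proj ↑(F k) x‖ ^ p) r] at this
    have hYr : (∑ k ∈ Finset.range r, ‖dY.proj ↑(G k) y‖ ^ q) ^ (1/q) ≤ cY * ‖y‖ := by
      have := hY r (fun k : Fin r => (↑(G k.1) : Set J)) (fun k => Finset.finite_toSet _)
        (fun k l hkl => Finset.disjoint_coe.2 (hG k.1 l.1 (fun h => hkl (Fin.val_injective h))))
        y
      rwa [show (∑ k : Fin r, ‖dY.proj ↑(G k.1) y‖ ^ q)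
          = ∑ k ∈ Finset.range r, ‖dY.proj ↑(G k) y‖ ^ q from
        Fin.sum_univ_eq_sum_range (fun k => ‖dY.proj ↑(G k) y‖ ^ q) r] at this
    have hnn1 : (0:ℝ) ≤ (∑ k ∈ Finset.range r, ‖dX.proj ↑(F k) x‖ ^ p) ^ (1/p) := by
      apply Real.rpow_nonneg
      exact Finset.sum_nonneg fun k _ => Real.rpow_nonneg (norm_nonneg _) _
    have hnn2 : (0:ℝ) ≤ (∑ k ∈ Finset.range r, ‖dY.proj ↑(G k) y‖ ^ q) ^ (1/q) := by
      apply Real.rpow_nonneg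
      exact Finset.sum_nonneg fun k _ => Real.rpow_nonneg (norm_nonneg _) _
    calc ∑ k ∈ Finset.range r, ‖dX.proj ↑(F k) x‖ * ‖dY.proj ↑(G k) y‖
        ≤ (∑ k ∈ Finset.range r, ‖dX.proj ↑(F k) x‖ ^ p) ^ (1/p)
          * (∑ k ∈ Finset.range r, ‖dY.proj ↑(G k) y‖ ^ p') ^ (1/p') := h1
      _ ≤ (∑ k ∈ Finset.range r, ‖dX.proj ↑(F k) x‖ ^ p) ^ (1/p)
          * (∑ k ∈ Finset.range r, ‖dY.proj ↑(G k) y‖ ^ q) ^ (1/q) :=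
          mul_le_mul_of_nonneg_left h2 hnn1
      _ ≤ (cX * ‖x‖) * (cY * ‖y‖) :=
          mul_le_mul hXr hYr hnn2 (by positivity)
  have hsummand : ∀ (x : X) (y : Y),
      Summable (fun k => ‖dX.proj ↑(F k) x‖ * ‖dY.proj ↑(G k) y‖) := fun x y =>
    summable_of_sum_range_le (fun k => by positivity) (fun r => key x y r)
  have hptle : ∀ (x : X) (y : Y) (k : ℕ),
      ‖c k * (f k x * g k y)‖ ≤ ‖dX.proj ↑(F k) x‖ * ‖dY.proj ↑(G k) y‖ := by
    intro x y k
    rw [norm_mul, norm_mul, Real.norm_eq_abs, Real.norm_eq_abs, Real.norm_eq_abs]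
    calc |c k| * (|f k x| * |g k y|) ≤ 1 * (|f k x| * |g k y|) := by
          apply mul_le_mul_of_nonneg_right (hc k) (by positivity)
      _ = |f k x| * |g k y| := one_mul _
      _ ≤ ‖dX.proj ↑(F k) x‖ * ‖dY.proj ↑(G k) y‖ := by
          apply mul_le_mul (hf k x) (hg k y) (abs_nonneg _) (norm_nonneg _)
  have hsum : ∀ (x : X) (y : Y), Summable (fun k => c k * (f k x * g k y)) := fun x y =>
    Summable.of_norm_bounded (hsummand x y) (hptle x y)
  set B₀ : X →ₗ[ℝ] Y →ₗ[ℝ] ℝ := LinearMap.mk₂ ℝ (fun x y => ∑' k, c k * (f k x * g k y))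
    (by
      intro x₁ x₂ y
      show (∑' k, c k * (f k (x₁ + x₂) * g k y))
          = (∑' k, c k * (f k x₁ * g k y)) + (∑' k, c k * (f k x₂ * g k y))
      have he : (fun k => c k * (f k (x₁ + x₂) * g k y))
          = fun k => c k * (f k x₁ * g k y) + c k * (f k x₂ * g k y) := by
        funext k; rw [map_add]; ring
      rw [he]
      exact Summable.tsum_add (hsum x₁ y) (hsum x₂ y))
    (by
      intro a x y
      show (∑' k, c k * (f k (a • x) * g k y)) = a • (∑' k, c k * (f k x * g k y))
      have he : (fun k => c k * (f k (a • x) * g k y))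
          = fun k => a * (c k * (f k x * g k y)) := by
        funext k
        rw [ContinuousLinearMap.map_smul]
        simp only [smul_eq_mul]; ring
      rw [he, tsum_mul_left]
      simp only [smul_eq_mul])
    (by
      intro x y₁ y₂
      show (∑' k, c k * (f k x * g k (y₁ + y₂)))
          = (∑' k, c k * (f k x * g k y₁)) + (∑' k, c k * (f k x * g k y₂))
      have he : (fun k => c k * (f k x * g k (y₁ + y₂)))
          = fun k => c k * (f k x * g k y₁) + c k * (f k x * g k y₂) := by
        funext k; rw [map_add]; ring
      rw [he]
      exact Summable.tsum_add (hsum x y₁) (hsum x y₂))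
    (by
      intro a x y
      show (∑' k, c k * (f k x * g k (a • y))) = a • (∑' k, c k * (f k x * g k y))
      have he : (fun k => c k * (f k x * g k (a • y)))
          = fun k => a * (c k * (f k x * g k y)) := by
        funext k
        rw [ContinuousLinearMap.map_smul]
        simp only [smul_eq_mul]; ring
      rw [he, tsum_mul_left]
      simp only [smul_eq_mul]) with hB₀
  have hbound : ∀ (x : X) (y : Y), ‖B₀ x y‖ ≤ (cX * cY) * ‖x‖ * ‖y‖ := by
    intro x y
    have hns : Summable (fun k => ‖c k * (f k x * g k y)‖) :=
      Summable.of_nonneg_of_le (fun k => norm_nonneg _) (hptle x y) (hsummand x y)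
    calc ‖B₀ x y‖ ≤ ∑' k, ‖c k * (f k x * g k y)‖ := norm_tsum_le_tsum_norm hns
      _ ≤ ∑' k, ‖dX.proj ↑(F k) x‖ * ‖dY.proj ↑(G k) y‖ :=
          Summable.tsum_le_tsum (hptle x y) hns (hsummand x y)
      _ ≤ (cX * ‖x‖) * (cY * ‖y‖) :=
          Real.tsum_le_of_sum_range_le (fun k => by positivity) (key x y)
      _ = (cX * cY) * ‖x‖ * ‖y‖ := by ring
  exact ⟨LinearMap.mkContinuous₂ B₀ (cX * cY) hbound, fun x y => rfl, hsum⟩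
set_option synthInstance.maxHeartbeats 1000000 in
set_option maxHeartbeats 1000000 in
/-- Any bounded bilinear form lifts to a functional on the projective tensor product. -/
lemma IsProjTensorProduct.exists_lift {X Y Z : Type*} [NormedAddCommGroup X] [NormedSpace ℝ X]
    [NormedAddCommGroup Y] [NormedSpace ℝ Y] [NormedAddCommGroup Z] [NormedSpace ℝ Z]
    {t : X →L[ℝ] Y →L[ℝ] Z} (ht : IsProjTensorProduct t) (B : X →L[ℝ] Y →L[ℝ] ℝ) :
    ∃ φ : Z →L[ℝ] ℝ, ∀ x y, φ (t x y) = B x y := by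
  obtain ⟨-, -, h3⟩ := ht
  have hcpos : (0:ℝ) < ‖B‖ + 1 := by positivity
  have hle : ‖(‖B‖ + 1)⁻¹ • B‖ ≤ 1 := by
    refine le_trans (ContinuousLinearMap.opNorm_smul_le _ _) ?_
    rw [norm_inv, Real.norm_eq_abs, abs_of_pos hcpos]
    rw [inv_mul_le_iff₀ hcpos]
    linarith
  obtain ⟨φ, -, hφ⟩ := h3 ((‖B‖ + 1)⁻¹ • B) hle
  refine ⟨(‖B‖ + 1) • φ, fun x y => ?_⟩
  have h := hφ x y
  simp only [ContinuousLinearMap.smul_apply, smul_eq_mul] at h ⊢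
  rw [h]
  field_simp

/-- Extract a weakly Cauchy subsequence from a sequence in `W₁`, using conditional weak
compactness of the elementary tensors and a nonzero element of `W₂`. -/
lemma extract_weakCauchy_left {X Y Z : Type*} [NormedAddCommGroup X] [NormedSpace ℝ X]
    [NormedAddCommGroup Y] [NormedSpace ℝ Y] [NormedAddCommGroup Z] [NormedSpace ℝ Z]
    {t : X →L[ℝ] Y →L[ℝ] Z} (ht : IsProjTensorProduct t) {W₁ : Set X} {W₂ : Set Y}
    (hW : CondWeaklyCompact {z : Z | ∃ x ∈ W₁, ∃ y ∈ W₂, z = t x y})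
    (a : ℕ → X) (ha : ∀ n, a n ∈ W₁) {y₀ : Y} (hy₀ : y₀ ∈ W₂) (hy0 : y₀ ≠ 0) :
    ∃ θ : ℕ → ℕ, StrictMono θ ∧
      ∀ F : X →L[ℝ] ℝ, ∃ l, Filter.Tendsto (fun n => F (a (θ n))) Filter.atTop (nhds l) := by
  obtain ⟨g, -, hgy⟩ := exists_dual_vector ℝ y₀ (norm_ne_zero_iff.2 hy0)
  obtain ⟨θ, hθ, hconv⟩ := hW (fun n => t (a n) y₀) (fun n => ⟨a n, ha n, y₀, hy₀, rfl⟩)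
  refine ⟨θ, hθ, fun F => ?_⟩
  obtain ⟨φ, hφ⟩ := ht.exists_lift (F.smulRight g)
  obtain ⟨l, hl⟩ := hconv φ
  have hynorm : (0:ℝ) < ‖y₀‖ := norm_pos_iff.2 hy0
  refine ⟨l / ‖y₀‖, ?_⟩
  have heq : ∀ n, F (a (θ n)) = φ (t (a (θ n)) y₀) / ‖y₀‖ := by
    intro n
    rw [hφ]
    simp only [ContinuousLinearMap.smulRight_apply, ContinuousLinearMap.smul_apply,
      smul_eq_mul]
    rw [show ((g y₀) : ℝ) = (‖y₀‖ : ℝ) from by exact_mod_cast hgy]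
    field_simp
  simp only [heq]
  exact hl.div_const _

/-- Symmetric version: extract a weakly Cauchy subsequence from a sequence in `W₂`. -/
lemma extract_weakCauchy_right {X Y Z : Type*} [NormedAddCommGroup X] [NormedSpace ℝ X]
    [NormedAddCommGroup Y] [NormedSpace ℝ Y] [NormedAddCommGroup Z] [NormedSpace ℝ Z]
    {t : X →L[ℝ] Y →L[ℝ] Z} (ht : IsProjTensorProduct t) {W₁ : Set X} {W₂ : Set Y}
    (hW : CondWeaklyCompact {z : Z | ∃ x ∈ W₁, ∃ y ∈ W₂, z = t x y})
    (b : ℕ → Y) (hb : ∀ n, b n ∈ W₂) {x₀ : X} (hx₀ : x₀ ∈ W₁) (hx0 : x₀ ≠ 0) :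
    ∃ θ : ℕ → ℕ, StrictMono θ ∧
      ∀ F : Y →L[ℝ] ℝ, ∃ l, Filter.Tendsto (fun n => F (b (θ n))) Filter.atTop (nhds l) := by
  obtain ⟨g, -, hgx⟩ := exists_dual_vector ℝ x₀ (norm_ne_zero_iff.2 hx0)
  obtain ⟨θ, hθ, hconv⟩ := hW (fun n => t x₀ (b n)) (fun n => ⟨x₀, hx₀, b n, hb n, rfl⟩)
  refine ⟨θ, hθ, fun F => ?_⟩
  obtain ⟨φ, hφ⟩ := ht.exists_lift (g.smulRight F)
  obtain ⟨l, hl⟩ := hconv φ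
  have hxnorm : (0:ℝ) < ‖x₀‖ := norm_pos_iff.2 hx0
  refine ⟨l / ‖x₀‖, ?_⟩
  have heq : ∀ n, F (b (θ n)) = φ (t x₀ (b (θ n))) / ‖x₀‖ := by
    intro n
    rw [hφ]
    simp only [ContinuousLinearMap.smulRight_apply, ContinuousLinearMap.smul_apply,
      smul_eq_mul]
    rw [show ((g x₀) : ℝ) = (‖x₀‖ : ℝ) from by exact_mod_cast hgx]
    field_simp
  simp only [heq]
  exact hl.div_const _
/-- Data for one step of the gliding hump construction. -/
structure BlockData (I J X Y : Type*) [NormedAddCommGroup X] [NormedSpace ℝ X]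
    [NormedAddCommGroup Y] [NormedSpace ℝ Y] where
  m : ℕ
  n : ℕ
  F : Finset I
  G : Finset J
  f : X →L[ℝ] ℝ
  g : Y →L[ℝ] ℝ

/-- The gliding hump construction: disjoint blocks and functionals detecting the separation
of two weakly Cauchy separated sequences. -/
lemma construct_blocks {I J X Y : Type*} [NormedAddCommGroup X] [NormedSpace ℝ X]
    [NormedAddCommGroup Y] [NormedSpace ℝ Y]
    (dX : SchauderDecomp I X) (dY : SchauderDecomp J Y)
    (hfdX : dX.FinDim) (hfdY : dY.FinDim)
    (a : ℕ → X) (b : ℕ → Y)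
    (ha : ∀ F : X →L[ℝ] ℝ, ∃ l, Filter.Tendsto (fun n => F (a n)) Filter.atTop (nhds l))
    (hb : ∀ F : Y →L[ℝ] ℝ, ∃ l, Filter.Tendsto (fun n => F (b n)) Filter.atTop (nhds l))
    {ε₁ ε₂ : ℝ} (hε₁ : 0 < ε₁) (hε₂ : 0 < ε₂)
    (hsep₁ : ∀ m n : ℕ, m ≠ n → ε₁ ≤ ‖a m - a n‖)
    (hsep₂ : ∀ m n : ℕ, m ≠ n → ε₂ ≤ ‖b m - b n‖)
    {η : ℝ} (hη : 0 < η) :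
    ∃ (m n : ℕ → ℕ) (F : ℕ → Finset I) (G : ℕ → Finset J)
      (f : ℕ → X →L[ℝ] ℝ) (g : ℕ → Y →L[ℝ] ℝ),
      (∀ k l, k ≠ l → Disjoint (F k) (F l)) ∧
      (∀ k l, k ≠ l → Disjoint (G k) (G l)) ∧
      (∀ k x, |f k x| ≤ ‖dX.proj ↑(F k) x‖) ∧
      (∀ k y, |g k y| ≤ ‖dY.proj ↑(G k) y‖) ∧
      (∀ k, ε₁ / 2 ≤ f k (a (n k) - a (m k))) ∧
      (∀ k, ε₂ / 2 ≤ g k (b (n k) - b (m k))) ∧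
      (∀ j k, j ≠ k → |f k (a (n j) - a (m j))| ≤ η / 2 ^ (max j k)) ∧
      (∀ j k, j ≠ k → |g k (b (n j) - b (m j))| ≤ η / 2 ^ (max j k)) := by
  classical
  -- one step of the construction
  have step : ∀ (k : ℕ) (prev : ∀ j, j < k → BlockData I J X Y),
      ∃ o : BlockData I J X Y,
        (∀ j (hj : j < k), Disjoint ((prev j hj).F) o.F) ∧
        (∀ j (hj : j < k), Disjoint ((prev j hj).G) o.G) ∧
        (∀ x, |o.f x| ≤ ‖dX.proj ↑o.F x‖) ∧
        (∀ y, |o.g y| ≤ ‖dY.proj ↑o.G y‖) ∧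
        ε₁ / 2 ≤ o.f (a o.n - a o.m) ∧
        ε₂ / 2 ≤ o.g (b o.n - b o.m) ∧
        (∀ j (hj : j < k), |(prev j hj).f (a o.n - a o.m)| ≤ η / 2 ^ k) ∧
        (∀ j (hj : j < k), |(prev j hj).g (b o.n - b o.m)| ≤ η / 2 ^ k) ∧
        (∀ j (hj : j < k),
          ‖dX.proj ↑o.F (a ((prev j hj).n) - a ((prev j hj).m))‖ ≤ η / 2 ^ k) ∧
        (∀ j (hj : j < k),
          ‖dY.proj ↑o.G (b ((prev j hj).n) - b ((prev j hj).m))‖ ≤ η / 2 ^ k) := by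
    intro k prev
    have hη2 : (0:ℝ) < η / 2 ^ k := by positivity
    -- vanishing sets for the previous difference vectors
    have hvanX : ∀ j : Fin k, ∃ s : Finset I, ∀ t : Finset I, Disjoint t s →
        ‖dX.proj ↑t (a ((prev j.1 j.2).n) - a ((prev j.1 j.2).m))‖ < η / 2 ^ k :=
      fun j => dX.vanishing _ hη2
    have hvanY : ∀ j : Fin k, ∃ s : Finset J, ∀ t : Finset J, Disjoint t s →
        ‖dY.proj ↑t (b ((prev j.1 j.2).n) - b ((prev j.1 j.2).m))‖ < η / 2 ^ k :=
      fun j => dY.vanishing _ hη2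
    choose sX hsX using hvanX
    choose sY hsY using hvanY
    set E : Finset I := Finset.univ.biUnion (fun j : Fin k => sX j ∪ (prev j.1 j.2).F)
      with hE
    set E' : Finset J := Finset.univ.biUnion (fun j : Fin k => sY j ∪ (prev j.1 j.2).G)
      with hE'
    -- choose a late pair of indices
    have hfa : ∀ j : Fin k, ∃ N, ∀ n₁ n₂, N ≤ n₁ → N ≤ n₂ →
        |(prev j.1 j.2).f (a n₁ - a n₂)| ≤ η / 2 ^ k := by
      intro j
      obtain ⟨l, hl⟩ := ha ((prev j.1 j.2).f)
      obtain ⟨N, hN⟩ := Metric.cauchySeq_iff.1 hl.cauchySeq (η / 2 ^ k) hη2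
      refine ⟨N, fun n₁ n₂ h1 h2 => ?_⟩
      have := hN n₁ h1 n₂ h2
      rw [Real.dist_eq, ← map_sub] at this
      exact le_of_lt this
    have hgb : ∀ j : Fin k, ∃ N, ∀ n₁ n₂, N ≤ n₁ → N ≤ n₂ →
        |(prev j.1 j.2).g (b n₁ - b n₂)| ≤ η / 2 ^ k := by
      intro j
      obtain ⟨l, hl⟩ := hb ((prev j.1 j.2).g)
      obtain ⟨N, hN⟩ := Metric.cauchySeq_iff.1 hl.cauchySeq (η / 2 ^ k) hη2
      refine ⟨N, fun n₁ n₂ h1 h2 => ?_⟩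
      have := hN n₁ h1 n₂ h2
      rw [Real.dist_eq, ← map_sub] at this
      exact le_of_lt this
    choose Nf hNf using hfa
    choose Ng hNg using hgb
    have hprojX : ∃ N, ∀ n₁ n₂, N ≤ n₁ → N ≤ n₂ →
        ‖dX.proj ↑E (a n₁ - a n₂)‖ ≤ ε₁ / 4 := by
      obtain ⟨w, hw⟩ := proj_tendsto_of_weakCauchy dX hfdX a ha E
      obtain ⟨N, hN⟩ := Metric.cauchySeq_iff.1 hw.cauchySeq (ε₁ / 4) (by positivity)
      refine ⟨N, fun n₁ n₂ h1 h2 => ?_⟩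
      have := hN n₁ h1 n₂ h2
      rw [dist_eq_norm, ← map_sub] at this
      exact le_of_lt this
    have hprojY : ∃ N, ∀ n₁ n₂, N ≤ n₁ → N ≤ n₂ →
        ‖dY.proj ↑E' (b n₁ - b n₂)‖ ≤ ε₂ / 4 := by
      obtain ⟨w, hw⟩ := proj_tendsto_of_weakCauchy dY hfdY b hb E'
      obtain ⟨N, hN⟩ := Metric.cauchySeq_iff.1 hw.cauchySeq (ε₂ / 4) (by positivity)
      refine ⟨N, fun n₁ n₂ h1 h2 => ?_⟩
      have := hN n₁ h1 n₂ h2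
      rw [dist_eq_norm, ← map_sub] at this
      exact le_of_lt this
    obtain ⟨NE, hNE⟩ := hprojX
    obtain ⟨NE', hNE'⟩ := hprojY
    set N : ℕ := max (max (Finset.univ.sup Nf) (Finset.univ.sup Ng)) (max NE NE') with hNdef
    set m₀ : ℕ := N with hm₀
    set n₀ : ℕ := N + 1 with hn₀
    set d : X := a n₀ - a m₀ with hd
    set e : Y := b n₀ - b m₀ with he
    have hm₀N : N ≤ m₀ := le_refl N
    have hn₀N : N ≤ n₀ := Nat.le_succ N
    have hdnorm : ε₁ ≤ ‖d‖ := hsep₁ n₀ m₀ (by omega)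
    have henorm : ε₂ ≤ ‖e‖ := hsep₂ n₀ m₀ (by omega)
    -- small previous functionals on the new difference
    have hfd_small : ∀ j (hj : j < k), |(prev j hj).f d| ≤ η / 2 ^ k := by
      intro j hj
      exact hNf ⟨j, hj⟩ n₀ m₀
        (le_trans (le_trans (Finset.le_sup (Finset.mem_univ (⟨j, hj⟩ : Fin k)))
          (le_max_left _ _)) (le_trans (le_max_left _ _) hn₀N))
        (le_trans (le_trans (Finset.le_sup (Finset.mem_univ (⟨j, hj⟩ : Fin k)))
          (le_max_left _ _)) (le_trans (le_max_left _ _) hm₀N))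
    have hge_small : ∀ j (hj : j < k), |(prev j hj).g e| ≤ η / 2 ^ k := by
      intro j hj
      exact hNg ⟨j, hj⟩ n₀ m₀
        (le_trans (le_trans (Finset.le_sup (Finset.mem_univ (⟨j, hj⟩ : Fin k)))
          (le_max_right _ _)) (le_trans (le_max_left _ _) hn₀N))
        (le_trans (le_trans (Finset.le_sup (Finset.mem_univ (⟨j, hj⟩ : Fin k)))
          (le_max_right _ _)) (le_trans (le_max_left _ _) hm₀N))
    have hEd : ‖dX.proj ↑E d‖ ≤ ε₁ / 4 :=
      hNE n₀ m₀ (le_trans (le_trans (le_max_left _ _) (le_max_right _ _)) hn₀N)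
        (le_trans (le_trans (le_max_left _ _) (le_max_right _ _)) hm₀N)
    have hE'e : ‖dY.proj ↑E' e‖ ≤ ε₂ / 4 :=
      hNE' n₀ m₀ (le_trans (le_trans (le_max_right _ _) (le_max_right _ _)) hn₀N)
        (le_trans (le_trans (le_max_right _ _) (le_max_right _ _)) hm₀N)
    -- the X-side hump
    have hcompl : ‖dX.proj (↑E : Set I)ᶜ d‖ ≥ 3 / 4 * ε₁ := by
      rw [dX.proj_compl]
      have := norm_sub_norm_le d (dX.proj ↑E d)
      linarith [hEd, hdnorm, norm_sub_norm_le d (dX.proj (↑E) d)]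
    have hhsX : Filter.Tendsto
        (fun s : Finset I => ∑ i ∈ s, ((↑E : Set I)ᶜ).indicator (fun i => dX.proj {i} d) i)
        Filter.atTop (nhds (dX.proj (↑E : Set I)ᶜ d)) := dX.hasSum_indicator _ d
    have hev := (Metric.tendsto_nhds.mp hhsX) (ε₁ / 4) (by positivity)
    rw [Filter.eventually_atTop] at hev
    obtain ⟨t₀, ht₀⟩ := hev
    have hdist := ht₀ t₀ le_rfl
    set Fk : Finset I := t₀.filter (fun i => i ∉ E) with hFk
    have hsum_eq : ∑ i ∈ t₀, ((↑E : Set I)ᶜ).indicator (fun i => dX.proj {i} d) i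
        = dX.proj ↑Fk d := by
      rw [dX.proj_finset, hFk, Finset.sum_filter]
      apply Finset.sum_congr rfl
      intro i _
      by_cases hi : i ∈ E
      · simp [Set.indicator_apply, hi]
      · simp [Set.indicator_apply, hi]
    have hFknorm : ε₁ / 2 ≤ ‖dX.proj ↑Fk d‖ := by
      rw [← hsum_eq]
      rw [dist_eq_norm] at hdist
      have h1 := norm_sub_norm_le
        (∑ i ∈ t₀, ((↑E : Set I)ᶜ).indicator (fun i => dX.proj {i} d) i)
        (dX.proj (↑E : Set I)ᶜ d)
      have h2 : ‖(∑ i ∈ t₀, ((↑E : Set I)ᶜ).indicator (fun i => dX.proj {i} d) i)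
          - dX.proj (↑E : Set I)ᶜ d‖ < ε₁ / 4 := hdist
      have h3 := norm_sub_norm_le (dX.proj (↑E : Set I)ᶜ d)
        (∑ i ∈ t₀, ((↑E : Set I)ᶜ).indicator (fun i => dX.proj {i} d) i)
      rw [norm_sub_rev] at h3
      linarith [hcompl]
    have hFkE : Disjoint Fk E := by
      rw [hFk, Finset.disjoint_left]
      intro i hi
      exact (Finset.mem_filter.1 hi).2
    have hneX : dX.proj ↑Fk d ≠ 0 := by
      intro h0
      rw [h0, norm_zero] at hFknorm
      linarith
    obtain ⟨ψ, hψ1, hψ2⟩ := exists_dual_vector ℝ (dX.proj ↑Fk d) (norm_ne_zero_iff.2 hneX)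
    set fk : X →L[ℝ] ℝ := ψ.comp (dX.proj ↑Fk) with hfk
    -- the Y-side hump
    have hcomplY : ‖dY.proj (↑E' : Set J)ᶜ e‖ ≥ 3 / 4 * ε₂ := by
      rw [dY.proj_compl]
      linarith [hE'e, henorm, norm_sub_norm_le e (dY.proj (↑E') e)]
    have hhsY : Filter.Tendsto
        (fun s : Finset J => ∑ i ∈ s, ((↑E' : Set J)ᶜ).indicator (fun i => dY.proj {i} e) i)
        Filter.atTop (nhds (dY.proj (↑E' : Set J)ᶜ e)) := dY.hasSum_indicator _ e
    have hevY := (Metric.tendsto_nhds.mp hhsY) (ε₂ / 4) (by positivity)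
    rw [Filter.eventually_atTop] at hevY
    obtain ⟨u₀, hu₀⟩ := hevY
    have hdistY := hu₀ u₀ le_rfl
    set Gk : Finset J := u₀.filter (fun i => i ∉ E') with hGk
    have hsum_eqY : ∑ i ∈ u₀, ((↑E' : Set J)ᶜ).indicator (fun i => dY.proj {i} e) i
        = dY.proj ↑Gk e := by
      rw [dY.proj_finset, hGk, Finset.sum_filter]
      apply Finset.sum_congr rfl
      intro i _
      by_cases hi : i ∈ E'
      · simp [Set.indicator_apply, hi]
      · simp [Set.indicator_apply, hi]
    have hGknorm : ε₂ / 2 ≤ ‖dY.proj ↑Gk e‖ := by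
      rw [← hsum_eqY]
      rw [dist_eq_norm] at hdistY
      have h3 := norm_sub_norm_le (dY.proj (↑E' : Set J)ᶜ e)
        (∑ i ∈ u₀, ((↑E' : Set J)ᶜ).indicator (fun i => dY.proj {i} e) i)
      rw [norm_sub_rev] at h3
      linarith [hcomplY, hdistY]
    have hGkE : Disjoint Gk E' := by
      rw [hGk, Finset.disjoint_left]
      intro i hi
      exact (Finset.mem_filter.1 hi).2
    have hneY : dY.proj ↑Gk e ≠ 0 := by
      intro h0
      rw [h0, norm_zero] at hGknorm
      linarith
    obtain ⟨χ, hχ1, hχ2⟩ := exists_dual_vector ℝ (dY.proj ↑Gk e) (norm_ne_zero_iff.2 hneY)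
    set gk : Y →L[ℝ] ℝ := χ.comp (dY.proj ↑Gk) with hgk
    -- assemble
    refine ⟨⟨m₀, n₀, Fk, Gk, fk, gk⟩, ?_, ?_, ?_, ?_, ?_, ?_, ?_, ?_, ?_, ?_⟩
    · intro j hj
      refine Finset.disjoint_of_subset_left ?_ hFkE.symm
      intro i hi
      rw [hE]
      exact Finset.mem_biUnion.2 ⟨⟨j, hj⟩, Finset.mem_univ _,
        Finset.mem_union_right _ hi⟩
    · intro j hj
      refine Finset.disjoint_of_subset_left ?_ hGkE.symm
      intro i hi
      rw [hE']
      exact Finset.mem_biUnion.2 ⟨⟨j, hj⟩, Finset.mem_univ _,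
        Finset.mem_union_right _ hi⟩
    · intro x
      have := ψ.le_opNorm (dX.proj ↑Fk x)
      rw [hψ1, one_mul] at this
      simpa [hfk, Real.norm_eq_abs] using this
    · intro y
      have := χ.le_opNorm (dY.proj ↑Gk y)
      rw [hχ1, one_mul] at this
      simpa [hgk, Real.norm_eq_abs] using this
    · show ε₁ / 2 ≤ fk d
      rw [hfk]
      simp only [ContinuousLinearMap.comp_apply]
      rw [show (ψ (dX.proj ↑Fk d) : ℝ) = ‖dX.proj ↑Fk d‖ from by exact_mod_cast hψ2]
      exact hFknorm
    · show ε₂ / 2 ≤ gk e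
      rw [hgk]
      simp only [ContinuousLinearMap.comp_apply]
      rw [show (χ (dY.proj ↑Gk e) : ℝ) = ‖dY.proj ↑Gk e‖ from by exact_mod_cast hχ2]
      exact hGknorm
    · exact hfd_small
    · exact hge_small
    · intro j hj
      have hdisj : Disjoint Fk (sX ⟨j, hj⟩) := by
        refine Finset.disjoint_of_subset_right ?_ hFkE
        intro i hi
        rw [hE]
        exact Finset.mem_biUnion.2 ⟨⟨j, hj⟩, Finset.mem_univ _,
          Finset.mem_union_left _ hi⟩
      exact le_of_lt (hsX ⟨j, hj⟩ Fk hdisj)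
    · intro j hj
      have hdisj : Disjoint Gk (sY ⟨j, hj⟩) := by
        refine Finset.disjoint_of_subset_right ?_ hGkE
        intro i hi
        rw [hE']
        exact Finset.mem_biUnion.2 ⟨⟨j, hj⟩, Finset.mem_univ _,
          Finset.mem_union_left _ hi⟩
      exact le_of_lt (hsY ⟨j, hj⟩ Gk hdisj)
  -- run the recursion
  let SF : ∀ k : ℕ, (∀ j, j < k → BlockData I J X Y) → BlockData I J X Y :=
    fun k prev => Classical.choose (step k prev)
  let seq : ℕ → BlockData I J X Y := natStrongFix SF
  have hseq : ∀ k,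
      (∀ j (hj : j < k), Disjoint ((seq j).F) (seq k).F) ∧
      (∀ j (hj : j < k), Disjoint ((seq j).G) (seq k).G) ∧
      (∀ x, |(seq k).f x| ≤ ‖dX.proj ↑(seq k).F x‖) ∧
      (∀ y, |(seq k).g y| ≤ ‖dY.proj ↑(seq k).G y‖) ∧
      ε₁ / 2 ≤ (seq k).f (a (seq k).n - a (seq k).m) ∧
      ε₂ / 2 ≤ (seq k).g (b (seq k).n - b (seq k).m) ∧
      (∀ j (hj : j < k), |(seq j).f (a (seq k).n - a (seq k).m)| ≤ η / 2 ^ k) ∧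
      (∀ j (hj : j < k), |(seq j).g (b (seq k).n - b (seq k).m)| ≤ η / 2 ^ k) ∧
      (∀ j (hj : j < k), ‖dX.proj ↑(seq k).F (a ((seq j).n) - a ((seq j).m))‖ ≤ η / 2 ^ k) ∧
      (∀ j (hj : j < k), ‖dY.proj ↑(seq k).G (b ((seq j).n) - b ((seq j).m))‖ ≤ η / 2 ^ k) := by
    intro k
    have h := Classical.choose_spec (step k (fun j _ => seq j))
    have e : seq k = SF k (fun j _ => seq j) := natStrongFix_eq SF k
    rw [e]
    exact h
  refine ⟨fun k => (seq k).m, fun k => (seq k).n, fun k => (seq k).F, fun k => (seq k).G,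
    fun k => (seq k).f, fun k => (seq k).g, ?_, ?_, ?_, ?_, ?_, ?_, ?_, ?_⟩
  · intro k l hkl
    rcases lt_or_gt_of_ne hkl with h1 | h1
    · exact (hseq l).1 k h1
    · exact ((hseq k).1 l h1).symm
  · intro k l hkl
    rcases lt_or_gt_of_ne hkl with h1 | h1
    · exact (hseq l).2.1 k h1
    · exact ((hseq k).2.1 l h1).symm
  · exact fun k => (hseq k).2.2.1
  · exact fun k => (hseq k).2.2.2.1
  · exact fun k => (hseq k).2.2.2.2.1
  · exact fun k => (hseq k).2.2.2.2.2.1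
  · intro j k hjk
    rcases lt_or_gt_of_ne hjk with h1 | h1
    · -- j < k : new functional f k is small on old difference d j
      have h2 := (hseq k).2.2.2.2.2.2.2.2.1 j h1
      have h3 := (hseq k).2.2.1 (a ((seq j).n) - a ((seq j).m))
      rw [max_eq_right (le_of_lt h1)]
      exact le_trans h3 h2
    · -- k < j : old functional f k is small on new difference d j
      have h2 := (hseq j).2.2.2.2.2.2.1 k h1
      rw [max_eq_left (le_of_lt h1)]
      exact h2
  · intro j k hjk
    rcases lt_or_gt_of_ne hjk with h1 | h1
    · have h2 := (hseq k).2.2.2.2.2.2.2.2.2 j h1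
      have h3 := (hseq k).2.2.2.1 (b ((seq j).n) - b ((seq j).m))
      rw [max_eq_right (le_of_lt h1)]
      exact le_trans h3 h2
    · have h2 := (hseq j).2.2.2.2.2.2.2.1 k h1
      rw [max_eq_left (le_of_lt h1)]
      exact h2
set_option maxHeartbeats 1000000 in
/-- if `W₁ ⊗ W₂` is conditionally weakly compact in `X ⊗π Y`, then `W₁` or `W₂`
is relatively norm compact. -/
theorem statement15 {p q : ℝ} (hp : 1 < p) (hq : 1 < q) (hpq : 1 ≤ 1 / p + 1 / q)
    {I J X Y Z : Type*}
    [NormedAddCommGroup X] [NormedSpace ℝ X] [CompleteSpace X]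
    [NormedAddCommGroup Y] [NormedSpace ℝ Y] [CompleteSpace Y]
    [NormedAddCommGroup Z] [NormedSpace ℝ Z] [CompleteSpace Z]
    (dX : SchauderDecomp I X) (dY : SchauderDecomp J Y)
    (hfdX : dX.FinDim) (hfdY : dY.FinDim)
    (hpX : dX.DisjLowerEstimate p) (hqY : dY.DisjLowerEstimate q)
    (t : X →L[ℝ] Y →L[ℝ] Z) (ht : IsProjTensorProduct t)
    (W₁ : Set X) (W₂ : Set Y)
    (hW : CondWeaklyCompact {z : Z | ∃ x ∈ W₁, ∃ y ∈ W₂, z = t x y}) :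
    IsCompact (closure W₁) ∨ IsCompact (closure W₂) := by
  classical
  by_contra hcon
  push_neg at hcon
  obtain ⟨h1, h2⟩ := hcon
  have htb1 : ¬ TotallyBounded W₁ := fun htb =>
    h1 (isCompact_iff_totallyBounded_isComplete.2
      ⟨htb.closure, isClosed_closure.isComplete⟩)
  have htb2 : ¬ TotallyBounded W₂ := fun htb =>
    h2 (isCompact_iff_totallyBounded_isComplete.2
      ⟨htb.closure, isClosed_closure.isComplete⟩)
  obtain ⟨ε₁, hε₁, a0, ha0W, hsep01⟩ := exists_separated_seq htb1
  obtain ⟨ε₂, hε₂, b0, hb0W, hsep02⟩ := exists_separated_seq htb2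
  -- nonzero elements of W₁ and W₂
  have hx0 : ∃ x₀ ∈ W₁, x₀ ≠ (0 : X) := by
    by_cases h : a0 0 = 0
    · refine ⟨a0 1, ha0W 1, fun h1' => ?_⟩
      have := hsep01 0 1 (by norm_num)
      rw [h, h1', sub_zero, norm_zero] at this
      linarith
    · exact ⟨a0 0, ha0W 0, h⟩
  have hy0 : ∃ y₀ ∈ W₂, y₀ ≠ (0 : Y) := by
    by_cases h : b0 0 = 0
    · refine ⟨b0 1, hb0W 1, fun h1' => ?_⟩
      have := hsep02 0 1 (by norm_num)
      rw [h, h1', sub_zero, norm_zero] at this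
      linarith
    · exact ⟨b0 0, hb0W 0, h⟩
  obtain ⟨x₀, hx₀W, hx₀ne⟩ := hx0
  obtain ⟨y₀, hy₀W, hy₀ne⟩ := hy0
  -- pass to weakly Cauchy subsequences
  obtain ⟨θa, hθa, hwa⟩ := extract_weakCauchy_left ht hW a0 ha0W hy₀W hy₀ne
  obtain ⟨θb, hθb, hwb⟩ := extract_weakCauchy_right ht hW b0 hb0W hx₀W hx₀ne
  set a : ℕ → X := fun n => a0 (θa n) with had
  set b : ℕ → Y := fun n => b0 (θb n) with hbd
  have haW : ∀ n, a n ∈ W₁ := fun n => ha0W _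
  have hbW : ∀ n, b n ∈ W₂ := fun n => hb0W _
  have hsep₁ : ∀ m n : ℕ, m ≠ n → ε₁ ≤ ‖a m - a n‖ := fun m n hmn =>
    hsep01 _ _ (fun h => hmn (hθa.injective h))
  have hsep₂ : ∀ m n : ℕ, m ≠ n → ε₂ ≤ ‖b m - b n‖ := fun m n hmn =>
    hsep02 _ _ (fun h => hmn (hθb.injective h))
  -- run the gliding hump construction
  set η : ℝ := min 1 (ε₁ * ε₂ / 32) with hηdef
  have hηpos : 0 < η := lt_min one_pos (by positivity)
  have hη1 : η ≤ 1 := min_le_left _ _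
  have hη32 : η ≤ ε₁ * ε₂ / 32 := min_le_right _ _
  obtain ⟨m, n, F, G, f, g, hFdisj, hGdisj, hf, hg, hfd, hge, hfsmall, hgsmall⟩ :=
    construct_blocks dX dY hfdX hfdY a b hwa hwb hε₁ hε₂ hsep₁ hsep₂ hηpos
  set d : ℕ → X := fun k => a (n k) - a (m k) with hdd
  set e : ℕ → Y := fun k => b (n k) - b (m k) with hed
  -- four tensor sequences
  set u1 : ℕ → Z := fun k => t (a (n k)) (b (n k)) with hu1d
  set u2 : ℕ → Z := fun k => t (a (n k)) (b (m k)) with hu2d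
  set u3 : ℕ → Z := fun k => t (a (m k)) (b (n k)) with hu3d
  set u4 : ℕ → Z := fun k => t (a (m k)) (b (m k)) with hu4d
  obtain ⟨φ1, hφ1mono, hφ1⟩ := hW u1 (fun k => ⟨a (n k), haW _, b (n k), hbW _, rfl⟩)
  obtain ⟨φ2, hφ2mono, hφ2⟩ := hW (u2 ∘ φ1)
    (fun k => ⟨a (n (φ1 k)), haW _, b (m (φ1 k)), hbW _, rfl⟩)
  obtain ⟨φ3, hφ3mono, hφ3⟩ := hW (u3 ∘ φ1 ∘ φ2)
    (fun k => ⟨a (m (φ1 (φ2 k))), haW _, b (n (φ1 (φ2 k))), hbW _, rfl⟩)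
  obtain ⟨φ4, hφ4mono, hφ4⟩ := hW (u4 ∘ φ1 ∘ φ2 ∘ φ3)
    (fun k => ⟨a (m (φ1 (φ2 (φ3 k)))), haW _, b (m (φ1 (φ2 (φ3 k)))), hbW _, rfl⟩)
  set ψ : ℕ → ℕ := fun j => φ1 (φ2 (φ3 (φ4 j))) with hψd
  have hψmono : StrictMono ψ := hφ1mono.comp (hφ2mono.comp (hφ3mono.comp hφ4mono))
  have hψinj : Function.Injective ψ := hψmono.injective
  -- coefficients
  set c : ℕ → ℝ := fun k => if h : ∃ i, ψ i = k then (-1 : ℝ) ^ (Classical.choose h) else 0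
    with hcd
  have hcabs : ∀ k, |c k| ≤ 1 := by
    intro k
    simp only [hcd]
    by_cases h : ∃ i, ψ i = k
    · rw [dif_pos h]
      rw [abs_pow, abs_neg, abs_one, one_pow]
    · rw [dif_neg h]
      norm_num
  have hcψ : ∀ j, c (ψ j) = (-1 : ℝ) ^ j := by
    intro j
    have h : ∃ i, ψ i = ψ j := ⟨j, rfl⟩
    simp only [hcd, dif_pos h]
    congr 1
    exact hψinj (Classical.choose_spec h)
  -- bilinear form and its lift
  obtain ⟨B, hB, hBsumm⟩ := exists_bilinear hp hq hpq dX dY hpX hqY F G hFdisj hGdisj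
    f g hf hg c hcabs
  obtain ⟨φZ, hφZ⟩ := ht.exists_lift B
  -- the oscillating sequence
  set s : ℕ → ℝ := fun j => B (d (ψ j)) (e (ψ j)) with hsd
  have hs_eq : ∀ j, s j = φZ (u1 (ψ j)) - φZ (u2 (ψ j)) - φZ (u3 (ψ j)) + φZ (u4 (ψ j)) := by
    intro j
    rw [hsd]
    simp only [hu1d, hu2d, hu3d, hu4d, hφZ, hdd, hed, map_sub,
      ContinuousLinearMap.sub_apply]
    ring
  -- s converges
  have hconv : ∃ L, Filter.Tendsto s Filter.atTop (nhds L) := by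
    obtain ⟨l1, hl1⟩ := hφ1 φZ
    obtain ⟨l2, hl2⟩ := hφ2 φZ
    obtain ⟨l3, hl3⟩ := hφ3 φZ
    obtain ⟨l4, hl4⟩ := hφ4 φZ
    have h234 : Filter.Tendsto (fun j => φ2 (φ3 (φ4 j))) Filter.atTop Filter.atTop :=
      (hφ2mono.comp (hφ3mono.comp hφ4mono)).tendsto_atTop
    have h34 : Filter.Tendsto (fun j => φ3 (φ4 j)) Filter.atTop Filter.atTop :=
      (hφ3mono.comp hφ4mono).tendsto_atTop
    have h4 : Filter.Tendsto φ4 Filter.atTop Filter.atTop := hφ4mono.tendsto_atTop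
    have t1 : Filter.Tendsto (fun j => φZ (u1 (ψ j))) Filter.atTop (nhds l1) := hl1.comp h234
    have t2 : Filter.Tendsto (fun j => φZ (u2 (ψ j))) Filter.atTop (nhds l2) := hl2.comp h34
    have t3 : Filter.Tendsto (fun j => φZ (u3 (ψ j))) Filter.atTop (nhds l3) := hl3.comp h4
    have t4 : Filter.Tendsto (fun j => φZ (u4 (ψ j))) Filter.atTop (nhds l4) := hl4
    refine ⟨l1 - l2 - l3 + l4, ?_⟩
    have := ((t1.sub t2).sub t3).add t4
    refine this.congr fun j => (hs_eq j).symm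
  -- the diagonal term
  set T : ℕ → ℝ := fun j => f (ψ j) (d (ψ j)) * g (ψ j) (e (ψ j)) with hTd
  have hTlb : ∀ j, ε₁ * ε₂ / 4 ≤ T j := by
    intro j
    have h1 := hfd (ψ j)
    have h2 := hge (ψ j)
    have := mul_le_mul h1 h2 (by positivity) (le_trans (by positivity) h1)
    calc ε₁ * ε₂ / 4 = ε₁ / 2 * (ε₂ / 2) := by ring
      _ ≤ T j := this
  -- the remainder bound
  have hR : ∀ j, |s j - (-1 : ℝ) ^ j * T j| ≤ ε₁ * ε₂ / 24 := by
    intro j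
    have hsplit := Summable.tsum_eq_add_tsum_ite (hBsumm (d (ψ j)) (e (ψ j))) (ψ j)
    have hgs : Summable (fun k : ℕ => η * η * (1 / 4 : ℝ) ^ k) :=
      (summable_geometric_of_lt_one (by norm_num) (by norm_num)).mul_left _
    have hbound : ∀ k : ℕ,
        ‖if k = ψ j then (0:ℝ) else c k * (f k (d (ψ j)) * g k (e (ψ j)))‖
          ≤ η * η * (1 / 4 : ℝ) ^ k := by
      intro k
      by_cases hk : k = ψ j
      · rw [if_pos hk, norm_zero]
        positivity
      · rw [if_neg hk]
        have hf1 : |f k (d (ψ j))| ≤ η / 2 ^ k := by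
          have := hfsmall (ψ j) k (fun h => hk h.symm)
          refine le_trans this ?_
          apply div_le_div_of_nonneg_left (le_of_lt hηpos) (by positivity)
          exact pow_le_pow_right₀ (by norm_num) (le_max_right _ _)
        have hg1 : |g k (e (ψ j))| ≤ η / 2 ^ k := by
          have := hgsmall (ψ j) k (fun h => hk h.symm)
          refine le_trans this ?_
          apply div_le_div_of_nonneg_left (le_of_lt hηpos) (by positivity)
          exact pow_le_pow_right₀ (by norm_num) (le_max_right _ _)
        have heq4 : η / 2 ^ k * (η / 2 ^ k) = η * η * (1 / 4 : ℝ) ^ k := by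
          rw [div_mul_div_comm, ← mul_pow]
          norm_num
          rw [div_eq_mul_inv, ← inv_pow]
          norm_num
        calc ‖c k * (f k (d (ψ j)) * g k (e (ψ j)))‖
            = |c k| * (|f k (d (ψ j))| * |g k (e (ψ j))|) := by
              rw [Real.norm_eq_abs, abs_mul, abs_mul]
          _ ≤ 1 * (η / 2 ^ k * (η / 2 ^ k)) := by
              apply mul_le_mul (hcabs k) ?_ (by positivity) zero_le_one
              apply mul_le_mul hf1 hg1 (abs_nonneg _) (by positivity)
          _ = η * η * (1 / 4 : ℝ) ^ k := by rw [one_mul, heq4]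
    have hsummnorm : Summable (fun k : ℕ =>
        ‖if k = ψ j then (0:ℝ) else c k * (f k (d (ψ j)) * g k (e (ψ j)))‖) :=
      Summable.of_nonneg_of_le (fun k => norm_nonneg _) hbound hgs
    have habs : |∑' k : ℕ, if k = ψ j then (0:ℝ)
        else c k * (f k (d (ψ j)) * g k (e (ψ j)))| ≤ η * η * (4 / 3 : ℝ) := by
      have h1 : ‖∑' k : ℕ, if k = ψ j then (0:ℝ)
          else c k * (f k (d (ψ j)) * g k (e (ψ j)))‖
          ≤ ∑' k : ℕ, ‖if k = ψ j then (0:ℝ)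
          else c k * (f k (d (ψ j)) * g k (e (ψ j)))‖ :=
        norm_tsum_le_tsum_norm hsummnorm
      have h2 : ∑' k : ℕ, ‖if k = ψ j then (0:ℝ)
          else c k * (f k (d (ψ j)) * g k (e (ψ j)))‖
          ≤ ∑' k : ℕ, η * η * (1 / 4 : ℝ) ^ k :=
        Summable.tsum_le_tsum hbound hsummnorm hgs
      have h3 : ∑' k : ℕ, η * η * (1 / 4 : ℝ) ^ k = η * η * (4 / 3 : ℝ) := by
        rw [tsum_mul_left, tsum_geometric_of_lt_one (by norm_num) (by norm_num)]
        norm_num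
      rw [← Real.norm_eq_abs]
      rw [h3] at h2
      exact le_trans h1 h2
    have hseq2 : s j - (-1 : ℝ) ^ j * T j
        = ∑' k : ℕ, if k = ψ j then (0:ℝ)
          else c k * (f k (d (ψ j)) * g k (e (ψ j))) := by
      rw [hsd]
      simp only
      rw [hB, hsplit, hcψ j, hTd]
      ring
    rw [hseq2]
    refine le_trans habs ?_
    have hηη : η * η ≤ ε₁ * ε₂ / 32 := le_trans (by nlinarith) hη32
    linarith
  -- contradiction with convergence
  obtain ⟨L, hL⟩ := hconv
  have hcs := hL.cauchySeq
  rw [Metric.cauchySeq_iff] at hcs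
  obtain ⟨N, hN⟩ := hcs (ε₁ * ε₂ / 3) (by positivity)
  have hdist := hN (N + 1) (Nat.le_succ N) N le_rfl
  rw [Real.dist_eq] at hdist
  have hRN := abs_le.mp (hR N)
  have hRN1 := abs_le.mp (hR (N + 1))
  have hdist' := abs_lt.mp hdist
  have hTN := hTlb N
  have hTN1 := hTlb (N + 1)
  have hpow : ((-1 : ℝ)) ^ (N + 1) = -((-1 : ℝ) ^ N) := by
    rw [pow_succ]; ring
  have hεε : (0:ℝ) < ε₁ * ε₂ := by positivity
  have hsign : (-1 : ℝ) ^ N = 1 ∨ (-1 : ℝ) ^ N = -1 := neg_one_pow_eq_or ℝ N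
  rw [hpow] at hRN1
  rcases hsign with hs1 | hs1 <;> rw [hs1] at hRN hRN1 <;> linarith
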